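/- Let L be a finite geometric lattice of rank r with the minimal labeling λ induced by a linear order on its atoms, and let G_lex be the associated directed graph on the maximal chains of L. Then every maximal chain of L has directed distance at most binom(r,2) in G_lex to the unique ascending chain of L. -/
import Mathlib


/-- A finite bounded lattice is *geometric* if it is atomistic (every element is a join
of atoms) and semimodular (whenever distinct `y`, `y'` both cover `x`, the join `y ⊔ y'`
covers both). -/
def IsGeometricLattice (L : Type*) [Lattice L] [BoundedOrder L] : Prop :=
  (∀ x : L, ∃ s : Finset L, (∀ a ∈ s, IsAtom a) ∧ s.sup id = x) ∧
  (∀ x y y' : L, y ≠ y' → x ⋖ y → x ⋖ y' → y ⋖ (y ⊔ y') ∧ y' ⋖ (y ⊔ y'))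

/-- `lab` is the minimal labeling induced by the linear order on the atoms of `L`
represented by the function `f` (injective on atoms): for every cover relation `u ⋖ v`,
`lab u v` is the atom `a ≤ v` with `a ≰ u` having the least value of `f`. -/
def IsMinimalLabeling {L : Type*} [Lattice L] [OrderBot L] (f : L → ℕ) (lab : L → L → L) : Prop :=
  ∀ u v : L, u ⋖ v →
    IsAtom (lab u v) ∧ lab u v ≤ v ∧ ¬ lab u v ≤ u ∧
    ∀ a : L, IsAtom a → a ≤ v → ¬ a ≤ u → f (lab u v) ≤ f a

/-- `g` is a maximal chain `⊥ = g 0 ⋖ g 1 ⋖ ⋯ ⋖ g r = ⊤`. -/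
def IsMaxChainFun {L : Type*} [PartialOrder L] [BoundedOrder L] (r : ℕ)
    (g : Fin (r+1) → L) : Prop :=
  g 0 = ⊥ ∧ g (Fin.last r) = ⊤ ∧ ∀ i : Fin r, g i.castSucc ⋖ g i.succ

/-- The label sequence of the maximal chain `g` with respect to the labeling `lab`. -/
def labelSeq {L : Type*} (lab : L → L → L) {r : ℕ} (g : Fin (r+1) → L) (i : Fin r) : L :=
  lab (g i.castSucc) (g i.succ)

/-- The operator `T_i` of the directed graph `G_lex`: `TMove f lab i M M'` holds iff the
label sequence of `M` has a descent at rank `i` and `M'` is obtained from `M` by replacing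
the rank-`i` element by the unique element producing an ascent there, all other elements
unchanged. -/
def TMove {L : Type*} (f : L → ℕ) (lab : L → L → L) {r : ℕ} (i : ℕ)
    (M M' : Fin (r+1) → L) : Prop :=
  ∃ (h1 : 0 < i) (h2 : i < r),
    f (lab (M ⟨i, by omega⟩) (M ⟨i+1, by omega⟩)) <
      f (lab (M ⟨i-1, by omega⟩) (M ⟨i, by omega⟩)) ∧
    M' ⟨i, by omega⟩ ≠ M ⟨i, by omega⟩ ∧
    (∀ j : Fin (r+1), (j : ℕ) ≠ i → M' j = M j) ∧
    f (lab (M' ⟨i-1, by omega⟩) (M' ⟨i, by omega⟩)) ≤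
      f (lab (M' ⟨i, by omega⟩) (M' ⟨i+1, by omega⟩))

lemma chooseTwoSucc (n : ℕ) (hn : 0 < n) : n.choose 2 = (n-1) + (n-1).choose 2 := by
  cases n with
  | zero => exact absurd hn (by omega)
  | succ m =>
    have h := Nat.choose_succ_succ' m 1
    rw [Nat.choose_one_right] at h
    simpa using h

lemma eq_of_covBy_of_lt_le {L : Type*} [PartialOrder L] {a b c : L}
    (h : a ⋖ b) (h1 : a < c) (h2 : c ≤ b) : c = b := by
  by_contra hne
  exact h.2 h1 (h2.lt_of_ne hne)

lemma chainCov {L : Type*} [PartialOrder L] [BoundedOrder L] {r : ℕ} {N : Fin (r+1) → L}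
    (hN : IsMaxChainFun r N) {j : ℕ} (hj : j < r) :
    N ⟨j, by omega⟩ ⋖ N ⟨j+1, by omega⟩ := hN.2.2 ⟨j, hj⟩

lemma chainMono {L : Type*} [PartialOrder L] [BoundedOrder L] {r : ℕ} {N : Fin (r+1) → L}
    (hN : IsMaxChainFun r N) {a b : ℕ} (hab : a ≤ b) (hb : b ≤ r) :
    N ⟨a, by omega⟩ ≤ N ⟨b, by omega⟩ := by
  induction b with
  | zero => have h0 : a = 0 := by omega
            subst h0; exact le_rfl
  | succ b ih =>
    rcases Nat.eq_or_lt_of_le hab with rfl | h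
    · exact le_rfl
    · exact le_trans (ih (by omega) (by omega)) (chainCov hN (by omega)).le

lemma atomSupCov {L : Type*} [Lattice L] [BoundedOrder L] [Fintype L]
    (hsemi : ∀ x y y' : L, y ≠ y' → x ⋖ y → x ⋖ y' → y ⋖ (y ⊔ y') ∧ y' ⋖ (y ⊔ y'))
    {m : L} (hm : IsAtom m) : ∀ x : L, ¬ m ≤ x → x ⋖ x ⊔ m := by
  haveI : IsStronglyCoatomic L := IsStronglyCoatomic.of_wellFounded_gt wellFounded_gt
  intro x
  induction x using WellFoundedLT.induction with
  | _ x ih =>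
    intro hmx
    rcases eq_or_ne x ⊥ with rfl | hxbot
    · simpa using hm.bot_covBy
    · obtain ⟨z, -, hz⟩ := exists_le_covBy_of_lt (bot_lt_iff_ne_bot.2 hxbot)
      have hmz : ¬ m ≤ z := fun h => hmx (h.trans hz.le)
      have hzy : z ⋖ z ⊔ m := ih z hz.lt hmz
      have hne : x ≠ z ⊔ m := fun h => hmx (h ▸ le_sup_right)
      have hx : x ⋖ x ⊔ (z ⊔ m) := (hsemi z x (z ⊔ m) hne hz hzy).1
      have he : x ⊔ (z ⊔ m) = x ⊔ m := by rw [← sup_assoc, sup_eq_left.2 hz.le]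
      rwa [he] at hx

/-- In `G_lex`, every maximal chain is at directed distance at most `r.choose 2` from the
unique ascending chain: there is a directed path of length `d ≤ r.choose 2` of `G_lex`
moves from it to the ascending chain. -/
theorem stmt12 (L : Type*) [Lattice L] [Fintype L] [BoundedOrder L] (r : ℕ)
    (hgeo : IsGeometricLattice L)
    (hrank : ∀ c : Set L, IsMaxChain (· ≤ ·) c → c.ncard = r + 1)
    (f : L → ℕ) (hf : Set.InjOn f {a : L | IsAtom a})
    (lab : L → L → L) (hlab : IsMinimalLabeling f lab)
    (C : Fin (r+1) → L) (hC : IsMaxChainFun r C)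
    (hCasc : Monotone fun i => f (labelSeq lab C i))
    (M : Fin (r+1) → L) (hM : IsMaxChainFun r M) :
    ∃ d : ℕ, d ≤ r.choose 2 ∧
      ∃ Ms : Fin (d+1) → Fin (r+1) → L,
        Ms 0 = M ∧ Ms (Fin.last d) = C ∧
        (∀ k : Fin (d+1), IsMaxChainFun r (Ms k)) ∧
        (∀ k : Fin d, ∃ i : ℕ, TMove f lab i (Ms k.castSucc) (Ms k.succ)) := by
  rcases Nat.eq_zero_or_pos r with rfl | hr
  · have hMC : M = C := by
      funext p
      have hp : p = 0 := Fin.ext (by omega)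
      rw [hp, hM.1, hC.1]
    exact ⟨0, le_rfl, fun _ => M, rfl, hMC, fun _ => hM, fun q => q.elim0⟩
  have hsemi := hgeo.2
  -- minimality of the ascending chain's labels
  have hCmin : ∀ (k : ℕ) (hk : k < r) (a : L), IsAtom a → ¬ a ≤ C ⟨k, by omega⟩ →
      f (lab (C ⟨k, by omega⟩) (C ⟨k+1, by omega⟩)) ≤ f a := by
    intro k hk a ha hak
    have key : ∀ j (hj : k + j ≤ r), a ≤ C ⟨k+j, by omega⟩ →
        f (lab (C ⟨k, by omega⟩) (C ⟨k+1, by omega⟩)) ≤ f a := by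
      intro j
      induction j with
      | zero => intro _ haj; exact absurd haj hak
      | succ j ih =>
        intro hj haj
        by_cases h2 : a ≤ C ⟨k+j, by omega⟩
        · exact ih (by omega) h2
        · have hcv := chainCov hC (show k+j < r by omega)
          have hlabj := (hlab _ _ hcv).2.2.2 a ha haj h2
          exact le_trans (hCasc (show (⟨k, hk⟩ : Fin r) ≤ ⟨k+j, by omega⟩ from by
            simp [Fin.mk_le_mk])) hlabj
    have hfin : a ≤ C ⟨k + (r - k), by omega⟩ := by
      have he : (⟨k + (r-k), by omega⟩ : Fin (r+1)) = Fin.last r := Fin.ext (by simp; omega)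
      rw [he, hC.2.1]; exact le_top
    exact key (r - k) (by omega) hfin
  have hCstep : ∀ (k : ℕ) (hk : k < r),
      C ⟨k+1, by omega⟩ = C ⟨k, by omega⟩ ⊔ lab (C ⟨k, by omega⟩) (C ⟨k+1, by omega⟩) := by
    intro k hk
    obtain ⟨h1, h2, h3, -⟩ := hlab _ _ (chainCov hC hk)
    have hcv := chainCov hC hk
    have hcy : C ⟨k, by omega⟩ ⋖ C ⟨k, by omega⟩ ⊔ lab (C ⟨k, by omega⟩) (C ⟨k+1, by omega⟩) :=
      atomSupCov hsemi h1 _ h3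
    exact (eq_of_covBy_of_lt_le hcv hcy.lt (sup_le hcv.le h2)).symm
  -- main recursion
  have main : ∀ (μ : ℕ) (N : Fin (r+1) → L) (k i : ℕ) (hk : k < r) (hki : k < i) (hir : i ≤ r),
      (r+2) * (r-k) + i ≤ μ → IsMaxChainFun r N →
      (∀ p : Fin (r+1), (p : ℕ) ≤ k → N p = C p) →
      lab (C ⟨k, by omega⟩) (C ⟨k+1, by omega⟩) ≤ N ⟨i, by omega⟩ →
      ∃ d : ℕ, d ≤ (i - k - 1) + (r - k - 1).choose 2 ∧
        ∃ Ms : Fin (d+1) → Fin (r+1) → L,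
          Ms 0 = N ∧ Ms (Fin.last d) = C ∧
          (∀ q : Fin (d+1), IsMaxChainFun r (Ms q)) ∧
          (∀ q : Fin d, ∃ i' : ℕ, TMove f lab i' (Ms q.castSucc) (Ms q.succ)) := by
    intro μ
    induction μ using Nat.strong_induction_on with
    | _ μ IH =>
    intro N k i hk hki hir hμ hN hagree hmN
    obtain ⟨hatom_m, hmle, hmnle, hminlab⟩ := hlab _ _ (chainCov hC hk)
    by_cases hmid : ∃ i' : Fin (r+1), k < (i' : ℕ) ∧ (i' : ℕ) < i ∧
        lab (C ⟨k, by omega⟩) (C ⟨k+1, by omega⟩) ≤ N i'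
    · obtain ⟨i', h1, h2, h3⟩ := hmid
      obtain ⟨d, hd, rest⟩ := IH ((r+2)*(r-k) + (i' : ℕ)) (by omega) N k (i' : ℕ) hk h1
        (by omega) le_rfl hN hagree h3
      exact ⟨d, by omega, rest⟩
    · push_neg at hmid
      by_cases hik : i = k+1
      · subst hik
        have hNk : N ⟨k, by omega⟩ = C ⟨k, by omega⟩ := hagree ⟨k, by omega⟩ le_rfl
        have hcvN : C ⟨k, by omega⟩ ⋖ N ⟨k+1, by omega⟩ := by
          rw [← hNk]; exact chainCov hN hk
        have hle : C ⟨k+1, by omega⟩ ≤ N ⟨k+1, by omega⟩ := by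
          rw [hCstep k hk]
          exact sup_le hcvN.le hmN
        have hNk1 : C ⟨k+1, by omega⟩ = N ⟨k+1, by omega⟩ :=
          eq_of_covBy_of_lt_le hcvN (chainCov hC hk).lt hle
        have hagree' : ∀ p : Fin (r+1), (p : ℕ) ≤ k+1 → N p = C p := by
          intro p hp
          rcases Nat.eq_or_lt_of_le hp with he | hlt
          · have hpe : p = ⟨k+1, by omega⟩ := Fin.ext he
            rw [hpe]; exact hNk1.symm
          · exact hagree p (by omega)
        rcases Nat.lt_or_ge (k+1) r with hk1 | hk1
        · have htop : N ⟨r, by omega⟩ = ⊤ := hN.2.1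
          obtain ⟨d, hd, rest⟩ := IH ((r+2)*(r-(k+1)) + r)
            (by
              have hexp : (r+2)*(r-k) = (r+2)*(r-(k+1)) + (r+2) := by
                rw [show r - k = (r-(k+1)) + 1 by omega, Nat.mul_add, Nat.mul_one]
              omega)
            N (k+1) r hk1 hk1 le_rfl le_rfl hN hagree' (by rw [htop]; exact le_top)
          have hch : (r-k-1).choose 2 = (r-k-2) + (r-k-2).choose 2 := by
            have := chooseTwoSucc (r-k-1) (by omega)
            simpa [show r-k-1-1 = r-k-2 by omega] using this
          refine ⟨d, by
            have : r - (k+1) - 1 = r - k - 2 := by omega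
            rw [this] at hd
            omega, rest⟩
        · have hNC : N = C := funext fun p => hagree' p (by omega)
          subst hNC
          exact ⟨0, Nat.zero_le _, fun _ => N, rfl, rfl, fun _ => hN, fun q => q.elim0⟩
      · -- i ≥ k + 2 : perform one move
        obtain ⟨j, rfl⟩ : ∃ j, i = j + 2 := ⟨i - 2, by omega⟩
        have hkj : k ≤ j := by omega
        have hm1 : ¬ lab (C ⟨k, by omega⟩) (C ⟨k+1, by omega⟩) ≤ N ⟨j+1, by omega⟩ :=
          hmid ⟨j+1, by omega⟩ (show k < j+1 by omega) (show j+1 < j+2 by omega)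
        have hm2 : ¬ lab (C ⟨k, by omega⟩) (C ⟨k+1, by omega⟩) ≤ N ⟨j, by omega⟩ := by
          rcases Nat.eq_or_lt_of_le hkj with he | hlt
          · have hpe : (⟨j, by omega⟩ : Fin (r+1)) = ⟨k, by omega⟩ :=
              Fin.ext (show j = k by omega)
            rw [hpe, hagree ⟨k, by omega⟩ le_rfl]
            exact hmnle
          · exact hmid ⟨j, by omega⟩ (show k < j from hlt) (show j < j+2 by omega)
        have hcA : N ⟨j, by omega⟩ ⋖ N ⟨j+1, by omega⟩ := chainCov hN (by omega)
        have hcB : N ⟨j+1, by omega⟩ ⋖ N ⟨j+2, by omega⟩ := chainCov hN (by omega)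
        have hcy : N ⟨j, by omega⟩ ⋖ N ⟨j, by omega⟩ ⊔ lab (C ⟨k, by omega⟩) (C ⟨k+1, by omega⟩) :=
          atomSupCov hsemi hatom_m _ hm2
        set m := lab (C ⟨k, by omega⟩) (C ⟨k+1, by omega⟩) with hmdef
        set y := N ⟨j, by omega⟩ ⊔ m with hydef
        have hyne1 : y ≠ N ⟨j+1, by omega⟩ := fun h => hm1 (h ▸ le_sup_right)
        have hyleN2 : y ≤ N ⟨j+2, by omega⟩ := sup_le (le_trans hcA.le hcB.le) hmN
        have hyne2 : y ≠ N ⟨j+2, by omega⟩ := by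
          intro h
          exact not_covBy_of_lt_of_lt hcA.lt hcB.lt (h ▸ hcy)
        have hsem := hsemi _ _ _ (Ne.symm hyne1) hcA hcy
        have hsup_eq : N ⟨j+1, by omega⟩ ⊔ y = N ⟨j+2, by omega⟩ :=
          eq_of_covBy_of_lt_le hcB hsem.1.lt (sup_le hcB.le hyleN2)
        have hcy2 : y ⋖ N ⟨j+2, by omega⟩ := hsup_eq ▸ hsem.2
        set N' : Fin (r+1) → L := Function.update N ⟨j+1, by omega⟩ y with hN'def
        have hN'eq : ∀ (p : Fin (r+1)), (p : ℕ) ≠ j+1 → N' p = N p := by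
          intro p hp
          exact Function.update_of_ne (fun h => hp (by rw [h])) _ _
        have ej1 : ∀ (h : j+1 < r+1), N' ⟨j+1, h⟩ = y := fun h => Function.update_self _ _ _
        have ej : ∀ (h : j < r+1), N' ⟨j, h⟩ = N ⟨j, h⟩ :=
          fun h => hN'eq _ (show j ≠ j+1 by omega)
        have ej2 : ∀ (h : j+2 < r+1), N' ⟨j+2, h⟩ = N ⟨j+2, h⟩ :=
          fun h => hN'eq _ (show j+2 ≠ j+1 by omega)
        have hN'max : IsMaxChainFun r N' := by
          refine ⟨?_, ?_, ?_⟩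
          · rw [hN'eq 0 (by simp only [Fin.val_zero]; omega)]; exact hN.1
          · rw [hN'eq (Fin.last r) (by simp only [Fin.val_last]; omega)]; exact hN.2.1
          · intro q
            by_cases hq1 : (q : ℕ) = j
            · rw [hN'eq q.castSucc (by simp only [Fin.coe_castSucc]; omega),
                show q.succ = (⟨j+1, by omega⟩ : Fin (r+1)) from Fin.ext (by simp [Fin.val_succ]; omega),
                ej1, show q.castSucc = (⟨j, by omega⟩ : Fin (r+1)) from Fin.ext (by simp [Fin.coe_castSucc]; omega)]
              exact hcy
            · by_cases hq2 : (q : ℕ) = j+1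
              · rw [hN'eq q.succ (by simp only [Fin.val_succ]; omega),
                  show q.castSucc = (⟨j+1, by omega⟩ : Fin (r+1)) from Fin.ext (by simp [Fin.coe_castSucc]; omega),
                  ej1, show q.succ = (⟨j+2, by omega⟩ : Fin (r+1)) from Fin.ext (by simp [Fin.val_succ]; omega)]
                exact hcy2
              · rw [hN'eq q.castSucc (by simp only [Fin.coe_castSucc]; omega),
                  hN'eq q.succ (by simp only [Fin.val_succ]; omega)]
                exact hN.2.2 q
        have hCkleNj : C ⟨k, by omega⟩ ≤ N ⟨j, by omega⟩ := by
          rw [← hagree ⟨k, by omega⟩ le_rfl]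
          exact chainMono hN hkj (by omega)
        -- label facts
        have flabB : f (lab (N ⟨j+1, by omega⟩) (N ⟨j+2, by omega⟩)) = f m := by
          refine le_antisymm ((hlab _ _ hcB).2.2.2 m hatom_m hmN hm1) ?_
          refine hCmin k hk _ (hlab _ _ hcB).1 ?_
          intro hle
          exact (hlab _ _ hcB).2.2.1 (hle.trans (hCkleNj.trans hcA.le))
        have flabA : f m < f (lab (N ⟨j, by omega⟩) (N ⟨j+1, by omega⟩)) := by
          have hge : f m ≤ f (lab (N ⟨j, by omega⟩) (N ⟨j+1, by omega⟩)) := by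
            refine hCmin k hk _ (hlab _ _ hcA).1 ?_
            intro hle
            exact (hlab _ _ hcA).2.2.1 (hle.trans hCkleNj)
          refine hge.lt_of_ne ?_
          intro he
          have : m = lab (N ⟨j, by omega⟩) (N ⟨j+1, by omega⟩) :=
            hf hatom_m (hlab _ _ hcA).1 he
          exact hm1 (this ▸ (hlab _ _ hcA).2.1)
        have fasc : f (lab (N ⟨j, by omega⟩) y) ≤ f (lab y (N ⟨j+2, by omega⟩)) := by
          refine le_trans ((hlab _ _ hcy).2.2.2 m hatom_m le_sup_right hm2) ?_
          refine hCmin k hk _ (hlab _ _ hcy2).1 ?_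
          intro hle
          exact (hlab _ _ hcy2).2.2.1 (hle.trans (hCkleNj.trans le_sup_left))
        have hTM : TMove f lab (j+1) N N' := by
          refine ⟨by omega, by omega, ?_, ?_, hN'eq, ?_⟩
          · show f (lab (N ⟨j+1, by omega⟩) (N ⟨j+2, by omega⟩)) <
              f (lab (N ⟨j, by omega⟩) (N ⟨j+1, by omega⟩))
            exact flabB.trans_lt flabA
          · exact fun h => hyne1 ((ej1 (by omega)).symm.trans h)
          · have eA : f (lab (N' ⟨j, by omega⟩) (N' ⟨j+1, by omega⟩)) =
                f (lab (N ⟨j, by omega⟩) y) :=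
              congrArg f (congrArg₂ lab (ej (by omega)) (ej1 (by omega)))
            have eB : f (lab (N' ⟨j+1, by omega⟩) (N' ⟨j+2, by omega⟩)) =
                f (lab y (N ⟨j+2, by omega⟩)) :=
              congrArg f (congrArg₂ lab (ej1 (by omega)) (ej2 (by omega)))
            exact eA.trans_le (fasc.trans eB.ge)
        have hmy : m ≤ N' ⟨j+1, by omega⟩ :=
          le_of_le_of_eq le_sup_right (ej1 (by omega)).symm
        have hagree' : ∀ p : Fin (r+1), (p : ℕ) ≤ k → N' p = C p := by
          intro p hp
          rw [hN'eq p (by omega), hagree p hp]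
        obtain ⟨d, hd, Ms, hMs0, hMslast, hMsmax, hMsmv⟩ := IH ((r+2)*(r-k) + (j+1))
          (by omega) N' k (j+1) hk (by omega) (by omega) le_rfl hN'max hagree' hmy
        refine ⟨d+1, by omega, Fin.cons N Ms, Fin.cons_zero _ _, ?_, ?_, ?_⟩
        · rw [← Fin.succ_last, Fin.cons_succ]; exact hMslast
        · intro p
          refine Fin.cases ?_ ?_ p
          · rw [Fin.cons_zero]; exact hN
          · intro q; rw [Fin.cons_succ]; exact hMsmax q
        · intro q
          refine Fin.cases ?_ ?_ q
          · refine ⟨j+1, ?_⟩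
            rw [Fin.castSucc_zero, Fin.cons_zero, Fin.cons_succ, hMs0]
            exact hTM
          · intro q'
            obtain ⟨i', hTM'⟩ := hMsmv q'
            refine ⟨i', ?_⟩
            rw [← Fin.succ_castSucc, Fin.cons_succ, Fin.cons_succ]
            exact hTM'
  -- conclude
  have hagree0 : ∀ p : Fin (r+1), (p : ℕ) ≤ 0 → M p = C p := by
    intro p hp
    have hp0 : p = 0 := by
      apply Fin.ext
      simp only [Fin.val_zero]
      omega
    rw [hp0, hM.1, hC.1]
  have htop : M ⟨r, by omega⟩ = ⊤ := hM.2.1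
  obtain ⟨d, hd, rest⟩ := main ((r+2)*(r-0) + r) M 0 r hr hr le_rfl le_rfl hM hagree0
    (by rw [htop]; exact le_top)
  simp only [Nat.sub_zero] at hd
  have hch : r.choose 2 = (r-1) + (r-1).choose 2 := chooseTwoSucc r hr
  exact ⟨d, by omega, rest⟩
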